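/- Let π₋, π₊ ∈ (0,1) with π₋ + π₊ = 1, let a, b ∈ [0,1], and set a' = π₋²·(1−b) / (π₋²·(1−b) + π₊²·b) and b' = b. For a performance P = (tn, fp, fn, tp) with tn + fp = π₋ and fn + tp = π₊, define noskill(P) = (π₋·(tn+fn), π₋·(fp+tp), π₊·(tn+fn), π₊·(fp+tp)), and define the chance-corrected score K(P) = (R_{a,b}(P) − R_{a,b}(noskill(P))) / (1 − R_{a,b}(noskill(P))). Then for any two such performances P₁, P₂ for which all the scores involved are defined (nonzero denominators, and R_{a,b}(noskill(P_i)) ≠ 1), K(P₁) ≤ K(P₂) if and only if R_{a',b'}(P₁) ≤ R_{a',b'}(P₂); that is, Cohen-style correction for chance of R_{a,b} yields a score perfectly rank-correlated with R_{a',b'}. -/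

import Mathlib

/-- Canonical ranking score `R_{a,b}` of a performance `(tn, fp, fn, tp)`. -/
noncomputable def Rab (a b tn fp fn tp : ℝ) : ℝ :=
  ((1 - a) * tn + a * tp) / ((1 - a) * tn + (1 - b) * fp + b * fn + a * tp)

/-- Denominator of the canonical ranking score `R_{a,b}`. -/
def RabDen (a b tn fp fn tp : ℝ) : ℝ :=
  (1 - a) * tn + (1 - b) * fp + b * fn + a * tp

/-- The parameter `a'` such that Cohen-style chance correction of `R_{a,b}` is
perfectly rank-correlated with `R_{a',b}`. -/
noncomputable def aPrime (pn pp b : ℝ) : ℝ :=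
  pn ^ 2 * (1 - b) / (pn ^ 2 * (1 - b) + pp ^ 2 * b)

section helpers

private lemma kappa_aux (a b pn tn tp : ℝ)
    (hD : RabDen a b tn (pn - tn) (1 - pn - tp) tp ≠ 0)
    (hD0 : RabDen a b (pn * (tn + (1 - pn - tp))) (pn * (pn - tn + tp))
        ((1 - pn) * (tn + (1 - pn - tp))) ((1 - pn) * (pn - tn + tp)) ≠ 0)
    (hE : (1 - b) * (pn * (pn - tn + tp)) + b * ((1 - pn) * (tn + (1 - pn - tp))) ≠ 0)
    (hne : Rab a b (pn * (tn + (1 - pn - tp))) (pn * (pn - tn + tp))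
        ((1 - pn) * (tn + (1 - pn - tp))) ((1 - pn) * (pn - tn + tp)) ≠ 1) :
    (Rab a b tn (pn - tn) (1 - pn - tp) tp -
        Rab a b (pn * (tn + (1 - pn - tp))) (pn * (pn - tn + tp))
          ((1 - pn) * (tn + (1 - pn - tp))) ((1 - pn) * (pn - tn + tp))) /
      (1 - Rab a b (pn * (tn + (1 - pn - tp))) (pn * (pn - tn + tp))
          ((1 - pn) * (tn + (1 - pn - tp))) ((1 - pn) * (pn - tn + tp))) =
    (tn * tp - (pn - tn) * (1 - pn - tp)) /
      ((1 - b) * (pn * (pn - tn + tp)) + b * ((1 - pn) * (tn + (1 - pn - tp)))) := by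
  set n0 : ℝ := (1 - a) * (pn * (tn + (1 - pn - tp))) + a * ((1 - pn) * (pn - tn + tp)) with hn0
  set e : ℝ := (1 - b) * (pn * (pn - tn + tp)) + b * ((1 - pn) * (tn + (1 - pn - tp))) with he
  set dd : ℝ := tn * tp - (pn - tn) * (1 - pn - tp) with hdd
  have e2 : Rab a b (pn * (tn + (1 - pn - tp))) (pn * (pn - tn + tp))
      ((1 - pn) * (tn + (1 - pn - tp))) ((1 - pn) * (pn - tn + tp)) = n0 / (n0 + e) := by
    rw [Rab]; congr 1 <;> (simp only [hn0, he]; ring)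
  have e1 : Rab a b tn (pn - tn) (1 - pn - tp) tp = (n0 + dd) / (n0 + e) := by
    rw [Rab]; congr 1 <;> (simp only [hn0, he, hdd]; ring)
  have hd0' : n0 + e ≠ 0 := by
    have : RabDen a b (pn * (tn + (1 - pn - tp))) (pn * (pn - tn + tp))
        ((1 - pn) * (tn + (1 - pn - tp))) ((1 - pn) * (pn - tn + tp)) = n0 + e := by
      rw [RabDen, hn0, he]; ring
    rwa [this] at hD0
  rw [e1, e2]
  have h1 : (1 : ℝ) - n0 / (n0 + e) ≠ 0 := by
    rw [← e2]; exact sub_ne_zero_of_ne (Ne.symm hne)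
  field_simp at h1 ⊢
  try ring
  rw [mul_comm e dd, mul_assoc, mul_inv_cancel₀ hE, mul_one]

private lemma rprime_aux (b pn tn tp : ℝ)
    (hq : pn ^ 2 * (1 - b) + (1 - pn) ^ 2 * b ≠ 0)
    (hc : pn * (1 - b) + (1 - pn) * b ≠ 0)
    (hE : (1 - b) * (pn * (pn - tn + tp)) + b * ((1 - pn) * (tn + (1 - pn - tp))) ≠ 0)
    (hd' : RabDen (aPrime pn (1 - pn) b) b tn (pn - tn) (1 - pn - tp) tp ≠ 0) :
    Rab (aPrime pn (1 - pn) b) b tn (pn - tn) (1 - pn - tp) tp =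
      ((pn ^ 2 * (1 - b) + (1 - pn) ^ 2 * b) *
          ((tn * tp - (pn - tn) * (1 - pn - tp)) /
            ((1 - b) * (pn * (pn - tn + tp)) + b * ((1 - pn) * (tn + (1 - pn - tp))))) +
        pn * (1 - pn)) / (pn * (1 - b) + (1 - pn) * b) := by
  rw [RabDen] at hd'
  have hce : (pn * (1 - b) + (1 - pn) * b) *
      ((1 - b) * (pn * (pn - tn + tp)) + b * ((1 - pn) * (tn + (1 - pn - tp)))) ≠ 0 :=
    mul_ne_zero hc hE
  have key : Rab (aPrime pn (1 - pn) b) b tn (pn - tn) (1 - pn - tp) tp =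
      ((pn ^ 2 * (1 - b) + (1 - pn) ^ 2 * b) * (tn * tp - (pn - tn) * (1 - pn - tp)) +
        pn * (1 - pn) * ((1 - b) * (pn * (pn - tn + tp)) + b * ((1 - pn) * (tn + (1 - pn - tp))))) /
      ((pn * (1 - b) + (1 - pn) * b) *
        ((1 - b) * (pn * (pn - tn + tp)) + b * ((1 - pn) * (tn + (1 - pn - tp))))) := by
    rw [Rab, div_eq_div_iff hd' hce, aPrime]
    have hq' : pn ^ 2 * (1 - b) + b * (1 - pn) ^ 2 ≠ 0 := by rwa [mul_comm b]
    field_simp [hq']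
    ring
  rw [key, div_eq_div_iff hce hc]
  have hE' : pn * (1 - b) * (pn - tn + tp) + b * (1 - pn) * (tn + (1 - pn - tp)) ≠ 0 := by
    intro h; apply hE; linarith
  field_simp [hE']

end helpers

private lemma Ene_aux (a b pn tn tp : ℝ)
    (hD0 : RabDen a b (pn * (tn + (1 - pn - tp))) (pn * (pn - tn + tp))
        ((1 - pn) * (tn + (1 - pn - tp))) ((1 - pn) * (pn - tn + tp)) ≠ 0)
    (hne : Rab a b (pn * (tn + (1 - pn - tp))) (pn * (pn - tn + tp))
        ((1 - pn) * (tn + (1 - pn - tp))) ((1 - pn) * (pn - tn + tp)) ≠ 1) :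
    (1 - b) * (pn * (pn - tn + tp)) + b * ((1 - pn) * (tn + (1 - pn - tp))) ≠ 0 := by
  intro h
  apply hne
  rw [Rab]
  have hnum : (1 - a) * (pn * (tn + (1 - pn - tp))) + a * ((1 - pn) * (pn - tn + tp))
      = (1 - a) * (pn * (tn + (1 - pn - tp))) + (1 - b) * (pn * (pn - tn + tp)) +
        b * ((1 - pn) * (tn + (1 - pn - tp))) + a * ((1 - pn) * (pn - tn + tp)) := by
    linarith
  rw [hnum]
  rw [RabDen] at hD0
  exact div_self hD0

/-- Cohen-style correction for chance of `R_{a,b}`, for performances with fixed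
priors `(π₋, π₊)`, yields a score perfectly rank-correlated with `R_{a',b'}`
where `a' = π₋²·(1-b)/(π₋²·(1-b) + π₊²·b)` and `b' = b`. -/
theorem correctionForChance_rankCorrelated
    (pn pp : ℝ) (hpn : pn ∈ Set.Ioo (0:ℝ) 1) (hpp : pp ∈ Set.Ioo (0:ℝ) 1)
    (hps : pn + pp = 1)
    (a b : ℝ) (ha : a ∈ Set.Icc (0:ℝ) 1) (hb : b ∈ Set.Icc (0:ℝ) 1)
    (tn₁ fp₁ fn₁ tp₁ : ℝ)
    (htn₁ : 0 ≤ tn₁) (hfp₁ : 0 ≤ fp₁) (hfn₁ : 0 ≤ fn₁) (htp₁ : 0 ≤ tp₁)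
    (hsum₁ : tn₁ + fp₁ + fn₁ + tp₁ = 1)
    (hpr₁n : tn₁ + fp₁ = pn) (hpr₁p : fn₁ + tp₁ = pp)
    (tn₂ fp₂ fn₂ tp₂ : ℝ)
    (htn₂ : 0 ≤ tn₂) (hfp₂ : 0 ≤ fp₂) (hfn₂ : 0 ≤ fn₂) (htp₂ : 0 ≤ tp₂)
    (hsum₂ : tn₂ + fp₂ + fn₂ + tp₂ = 1)
    (hpr₂n : tn₂ + fp₂ = pn) (hpr₂p : fn₂ + tp₂ = pp)
    (hd₁ : RabDen a b tn₁ fp₁ fn₁ tp₁ ≠ 0)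
    (hd₂ : RabDen a b tn₂ fp₂ fn₂ tp₂ ≠ 0)
    (hn₁ : RabDen a b (pn * (tn₁ + fn₁)) (pn * (fp₁ + tp₁))
        (pp * (tn₁ + fn₁)) (pp * (fp₁ + tp₁)) ≠ 0)
    (hn₂ : RabDen a b (pn * (tn₂ + fn₂)) (pn * (fp₂ + tp₂))
        (pp * (tn₂ + fn₂)) (pp * (fp₂ + tp₂)) ≠ 0)
    (hne₁ : Rab a b (pn * (tn₁ + fn₁)) (pn * (fp₁ + tp₁))
        (pp * (tn₁ + fn₁)) (pp * (fp₁ + tp₁)) ≠ 1)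
    (hne₂ : Rab a b (pn * (tn₂ + fn₂)) (pn * (fp₂ + tp₂))
        (pp * (tn₂ + fn₂)) (pp * (fp₂ + tp₂)) ≠ 1)
    (hd₁' : RabDen (aPrime pn pp b) b tn₁ fp₁ fn₁ tp₁ ≠ 0)
    (hd₂' : RabDen (aPrime pn pp b) b tn₂ fp₂ fn₂ tp₂ ≠ 0) :
    (Rab a b tn₁ fp₁ fn₁ tp₁ -
          Rab a b (pn * (tn₁ + fn₁)) (pn * (fp₁ + tp₁))
            (pp * (tn₁ + fn₁)) (pp * (fp₁ + tp₁))) /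
        (1 - Rab a b (pn * (tn₁ + fn₁)) (pn * (fp₁ + tp₁))
            (pp * (tn₁ + fn₁)) (pp * (fp₁ + tp₁))) ≤
      (Rab a b tn₂ fp₂ fn₂ tp₂ -
          Rab a b (pn * (tn₂ + fn₂)) (pn * (fp₂ + tp₂))
            (pp * (tn₂ + fn₂)) (pp * (fp₂ + tp₂))) /
        (1 - Rab a b (pn * (tn₂ + fn₂)) (pn * (fp₂ + tp₂))
            (pp * (tn₂ + fn₂)) (pp * (fp₂ + tp₂))) ↔
      Rab (aPrime pn pp b) b tn₁ fp₁ fn₁ tp₁ ≤ Rab (aPrime pn pp b) b tn₂ fp₂ fn₂ tp₂ := by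
  
  obtain ⟨hpn0, hpn1⟩ := hpn
  obtain ⟨hpp0, hpp1⟩ := hpp
  obtain ⟨hb0, hb1⟩ := hb
  have hppe : pp = 1 - pn := by linarith
  subst hppe
  have e1 : fp₁ = pn - tn₁ := by linarith
  subst e1
  have e2 : fn₁ = 1 - pn - tp₁ := by linarith
  subst e2
  have e3 : fp₂ = pn - tn₂ := by linarith
  subst e3
  have e4 : fn₂ = 1 - pn - tp₂ := by linarith
  subst e4
  have hq : 0 < pn ^ 2 * (1 - b) + (1 - pn) ^ 2 * b := by
    rcases lt_or_eq_of_le hb1 with h | h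
    · exact add_pos_of_pos_of_nonneg (mul_pos (pow_pos hpn0 2) (by linarith))
        (mul_nonneg (sq_nonneg _) hb0)
    · rw [← h]; nlinarith [pow_pos (show (0:ℝ) < 1 - pn by linarith) 2]
  have hc : 0 < pn * (1 - b) + (1 - pn) * b := by
    rcases lt_or_eq_of_le hb1 with h | h
    · exact add_pos_of_pos_of_nonneg (mul_pos hpn0 (by linarith))
        (mul_nonneg (by linarith) hb0)
    · rw [← h]; nlinarith
  have hE₁ := Ene_aux a b pn tn₁ tp₁ hn₁ hne₁
  have hE₂ := Ene_aux a b pn tn₂ tp₂ hn₂ hne₂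
  rw [kappa_aux a b pn tn₁ tp₁ hd₁ hn₁ hE₁ hne₁,
      kappa_aux a b pn tn₂ tp₂ hd₂ hn₂ hE₂ hne₂,
      rprime_aux b pn tn₁ tp₁ hq.ne' hc.ne' hE₁ hd₁',
      rprime_aux b pn tn₂ tp₂ hq.ne' hc.ne' hE₂ hd₂']
  set x : ℝ := (tn₁ * tp₁ - (pn - tn₁) * (1 - pn - tp₁)) /
      ((1 - b) * (pn * (pn - tn₁ + tp₁)) + b * ((1 - pn) * (tn₁ + (1 - pn - tp₁)))) with hx
  set y : ℝ := (tn₂ * tp₂ - (pn - tn₂) * (1 - pn - tp₂)) /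
      ((1 - b) * (pn * (pn - tn₂ + tp₂)) + b * ((1 - pn) * (tn₂ + (1 - pn - tp₂)))) with hy
  rw [div_le_div_iff₀ hc hc]
  constructor <;> intro h
  · nlinarith [mul_nonneg (mul_pos hq hc).le (sub_nonneg.mpr h)]
  · have h2 : (pn ^ 2 * (1 - b) + (1 - pn) ^ 2 * b) * (pn * (1 - b) + (1 - pn) * b) * x ≤
        (pn ^ 2 * (1 - b) + (1 - pn) ^ 2 * b) * (pn * (1 - b) + (1 - pn) * b) * y := by
      nlinarith
    exact le_of_mul_le_mul_left h2 (mul_pos hq hc)
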